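/- Let a ≥ 0, c′ ≥ 0, K₁ ≥ 0, K₂ ≥ 0, λ̂ > λ > 0, β > 0, and t_k ≥ 0, define K₃ = c′·(K₁·exp((λ−λ̂)·t_k)/(a+λ̂) + K₂/(a+λ)), assume K₃ > 0, and set τ = ln(1 + β/K₃)/(a + λ̂). Let e : ℝ → ℝⁿ be differentiable on [t_k, t_k + τ] with e(t_k) = 0 and ‖e′(t)‖ ≤ a·‖e(t)‖ + c′·(K₁·exp(−λ̂·t) + K₂·exp(−λ·t)) for all t ∈ [t_k, t_k + τ]. Then ‖e(t)‖ ≤ β·exp(−λ·t) for all t ∈ [t_k, t_k + τ]; in particular, the next time at which ‖e(t)‖ can reach the threshold β·exp(−λ·t) is at least t_k + τ, so the inter-event times are lower bounded by the positive constant τ and no Zeno behavior occurs. -/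

import Mathlib

/-- Zeno-freeness: with `K₃ = c′(K₁ e^{(λ-λ̂)t_k}/(a+λ̂) + K₂/(a+λ)) > 0` and
`τ = ln(1 + β/K₃)/(a+λ̂)`, if the event-triggering error `e` satisfies `e(t_k) = 0` and
`‖e′(t)‖ ≤ a‖e(t)‖ + c′(K₁ e^{-λ̂ t} + K₂ e^{-λ t})` on `[t_k, t_k + τ]`, then `τ > 0` and
`‖e(t)‖ ≤ β e^{-λ t}` on the whole interval `[t_k, t_k + τ]`, so the threshold `β e^{-λ t}`
cannot be reached before `t_k + τ` and the inter-event times are lower bounded by `τ`. -/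
theorem stmt9 (n : ℕ) (hn : 0 < n) (a c' K₁ K₂ lamhat lam β tk : ℝ)
    (ha : 0 ≤ a) (hc' : 0 ≤ c') (hK₁ : 0 ≤ K₁) (hK₂ : 0 ≤ K₂)
    (hlam : 0 < lam) (hlamlt : lam < lamhat) (hβ : 0 < β) (htk : 0 ≤ tk)
    (K₃ : ℝ)
    (hK₃def : K₃ = c' * (K₁ * Real.exp ((lam - lamhat) * tk) / (a + lamhat) + K₂ / (a + lam)))
    (hK₃pos : 0 < K₃)
    (τ : ℝ) (hτdef : τ = Real.log (1 + β / K₃) / (a + lamhat))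
    (e e' : ℝ → EuclideanSpace ℝ (Fin n))
    (hderiv : ∀ t ∈ Set.Icc tk (tk + τ), HasDerivWithinAt e (e' t) (Set.Icc tk (tk + τ)) t)
    (h0 : e tk = 0)
    (hbnd : ∀ t ∈ Set.Icc tk (tk + τ),
      ‖e' t‖ ≤ a * ‖e t‖ + c' * (K₁ * Real.exp (-(lamhat * t)) + K₂ * Real.exp (-(lam * t)))) :
    0 < τ ∧ ∀ t ∈ Set.Icc tk (tk + τ), ‖e t‖ ≤ β * Real.exp (-(lam * t)) := by
  have hp : (0:ℝ) < a + lamhat := by linarith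
  have hq : (0:ℝ) < a + lam := by linarith
  have hβK : 0 < β / K₃ := div_pos hβ hK₃pos
  have hτpos : 0 < τ := by
    rw [hτdef]
    exact div_pos (Real.log_pos (by linarith)) hp
  refine ⟨hτpos, ?_⟩
  set B : ℝ → ℝ := fun t => c' * (K₁ *
      ((Real.exp (-((a+lamhat)*tk)) - Real.exp (-((a+lamhat)*t))) / (a+lamhat)) +
      K₂ * ((Real.exp (-((a+lam)*tk)) - Real.exp (-((a+lam)*t))) / (a+lam))) *
      Real.exp (a*t) with hBdef
  -- derivative of B
  have hB : ∀ x : ℝ, HasDerivAt B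
      (a * B x + c' * (K₁ * Real.exp (-(lamhat*x)) + K₂ * Real.exp (-(lam*x)))) x := by
    intro x
    have hin1 : HasDerivAt (fun t : ℝ => -((a+lamhat)*t)) (-(a+lamhat)) x := by
      simpa [Pi.neg_def] using ((hasDerivAt_id x).const_mul (a+lamhat)).neg
    have hin2 : HasDerivAt (fun t : ℝ => -((a+lam)*t)) (-(a+lam)) x := by
      simpa [Pi.neg_def] using ((hasDerivAt_id x).const_mul (a+lam)).neg
    have h1 : HasDerivAt
        (fun t : ℝ => (Real.exp (-((a+lamhat)*tk)) - Real.exp (-((a+lamhat)*t))) / (a+lamhat))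
        (Real.exp (-((a+lamhat)*x))) x := by
      have h := ((hin1.exp).const_sub (Real.exp (-((a+lamhat)*tk)))).div_const (a+lamhat)
      refine h.congr_deriv (Eq.symm ?_)
      field_simp
    have h2 : HasDerivAt
        (fun t : ℝ => (Real.exp (-((a+lam)*tk)) - Real.exp (-((a+lam)*t))) / (a+lam))
        (Real.exp (-((a+lam)*x))) x := by
      have h := ((hin2.exp).const_sub (Real.exp (-((a+lam)*tk)))).div_const (a+lam)
      refine h.congr_deriv (Eq.symm ?_)
      field_simp
    have h3 : HasDerivAt (fun t : ℝ => Real.exp (a*t)) (Real.exp (a*x) * a) x := by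
      have hin : HasDerivAt (fun t : ℝ => a*t) a x := by
        simpa using (hasDerivAt_id x).const_mul a
      exact hin.exp
    have h4 := (((h1.const_mul K₁).add (h2.const_mul K₂)).const_mul c').mul h3
    refine h4.congr_deriv (Eq.symm ?_)
    have ea : Real.exp (-((a+lamhat)*x)) * Real.exp (a*x) = Real.exp (-(lamhat*x)) := by
      rw [← Real.exp_add]; congr 1; ring
    have eb : Real.exp (-((a+lam)*x)) * Real.exp (a*x) = Real.exp (-(lam*x)) := by
      rw [← Real.exp_add]; congr 1; ring
    simp only [hBdef, Pi.add_apply]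
    linear_combination (-(c'*K₁))*ea + (-(c'*K₂))*eb
  -- the fence: ‖e t‖ ≤ B t on the interval
  have hcont : ContinuousOn e (Set.Icc tk (tk+τ)) := fun x hx =>
    (hderiv x hx).continuousWithinAt
  have hderiv' : ∀ x ∈ Set.Ico tk (tk+τ), HasDerivWithinAt e (e' x) (Set.Ici x) x := fun x hx =>
    (hderiv x (Set.Ico_subset_Icc_self hx)).mono_of_mem_nhdsWithin (Icc_mem_nhdsGE_of_mem hx)
  have hmain : ∀ t ∈ Set.Icc tk (tk+τ), ‖e t‖ ≤ B t := by
    intro t ht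
    refine le_of_forall_pos_le_add fun ε hε => ?_
    set η : ℝ := ε / Real.exp ((a+1)*τ) with hηdef
    have hη : 0 < η := div_pos hε (Real.exp_pos _)
    have hE : ∀ x : ℝ, HasDerivAt (fun y => η * Real.exp ((a+1)*(y - tk)))
        (η * ((a+1) * Real.exp ((a+1)*(x - tk)))) x := by
      intro x
      have hin : HasDerivAt (fun y : ℝ => (a+1)*(y - tk)) (a+1) x := by
        simpa using ((hasDerivAt_id' x).sub_const tk).const_mul (a+1)
      have h := (hin.exp).const_mul η
      refine h.congr_deriv (Eq.symm ?_)
      ring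
    have hBη : ∀ x : ℝ, HasDerivAt (fun y => B y + η * Real.exp ((a+1)*(y - tk)))
        ((fun x => a * B x + c' * (K₁ * Real.exp (-(lamhat*x)) + K₂ * Real.exp (-(lam*x))) +
          η * ((a+1) * Real.exp ((a+1)*(x - tk)))) x) x := fun x => (hB x).add (hE x)
    have hBtk : B tk = 0 := by simp [hBdef]
    have ha' : ‖e tk‖ ≤ B tk + η * Real.exp ((a+1)*(tk - tk)) := by
      rw [h0, norm_zero, hBtk]
      positivity
    have bound : ∀ x ∈ Set.Ico tk (tk+τ),
        ‖e x‖ = B x + η * Real.exp ((a+1)*(x - tk)) →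
        ‖e' x‖ < a * B x + c' * (K₁ * Real.exp (-(lamhat*x)) + K₂ * Real.exp (-(lam*x))) +
          η * ((a+1) * Real.exp ((a+1)*(x - tk))) := by
      intro x hx heq
      have h1 := hbnd x (Set.Ico_subset_Icc_self hx)
      rw [heq] at h1
      have hpos : 0 < η * Real.exp ((a+1)*(x - tk)) :=
        mul_pos hη (Real.exp_pos _)
      nlinarith [Real.exp_pos ((a+1)*(x - tk)), hpos]
    have := image_norm_le_of_norm_deriv_right_lt_deriv_boundary hcont hderiv' ha' hBη bound ht
    have hle : η * Real.exp ((a+1)*(t - tk)) ≤ ε := by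
      have h1 : Real.exp ((a+1)*(t - tk)) ≤ Real.exp ((a+1)*τ) := by
        apply Real.exp_le_exp.2
        have h2 : t - tk ≤ τ := by linarith [ht.2]
        exact mul_le_mul_of_nonneg_left h2 (by linarith)
      calc η * Real.exp ((a+1)*(t - tk)) ≤ η * Real.exp ((a+1)*τ) := by
            exact mul_le_mul_of_nonneg_left h1 hη.le
        _ = ε := by
            rw [hηdef]
            field_simp
    linarith
  -- final estimate B t ≤ β exp(-λ t)
  intro t ht
  refine (hmain t ht).trans ?_
  have hs0 : 0 ≤ t - tk := by linarith [ht.1]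
  have hsτ : t - tk ≤ τ := by linarith [ht.2]
  set u : ℝ := Real.exp ((a+lamhat)*(t-tk)) with hu
  set v : ℝ := Real.exp ((lam-lamhat)*(t-tk)) with hv
  set w : ℝ := Real.exp ((lam-lamhat)*tk) with hw
  have hu1 : (1:ℝ) ≤ u := Real.one_le_exp (mul_nonneg hp.le hs0)
  have hv1 : v ≤ 1 := Real.exp_le_one_iff.2 (mul_nonpos_of_nonpos_of_nonneg (by linarith) hs0)
  have hv0 : (0:ℝ) < v := Real.exp_pos _
  have hw0 : (0:ℝ) < w := Real.exp_pos _
  have hexpτ : Real.exp ((a+lamhat)*τ) = 1 + β/K₃ := by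
    have h1 : (a+lamhat)*τ = Real.log (1 + β/K₃) := by
      rw [hτdef]; field_simp
    rw [h1, Real.exp_log (by positivity)]
  have huβ : u ≤ 1 + β/K₃ := by
    rw [hu, ← hexpτ]
    exact Real.exp_le_exp.2 (mul_le_mul_of_nonneg_left hsτ hp.le)
  have e1 : Real.exp (-((a+lamhat)*tk)) * Real.exp (a*t) * Real.exp (lam*t) =
      Real.exp ((lam-lamhat)*tk) * (Real.exp ((lam-lamhat)*(t-tk)) *
        Real.exp ((a+lamhat)*(t-tk))) := by
    rw [← Real.exp_add, ← Real.exp_add, ← Real.exp_add, ← Real.exp_add]; congr 1; ring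
  have e2 : Real.exp (-((a+lamhat)*t)) * Real.exp (a*t) * Real.exp (lam*t) =
      Real.exp ((lam-lamhat)*tk) * Real.exp ((lam-lamhat)*(t-tk)) := by
    rw [← Real.exp_add, ← Real.exp_add, ← Real.exp_add]; congr 1; ring
  have e3 : Real.exp (-((a+lam)*tk)) * Real.exp (a*t) * Real.exp (lam*t) =
      Real.exp ((a+lamhat)*(t-tk)) * Real.exp ((lam-lamhat)*(t-tk)) := by
    rw [← Real.exp_add, ← Real.exp_add, ← Real.exp_add]; congr 1; ring
  have e4 : Real.exp (-((a+lam)*t)) * Real.exp (a*t) * Real.exp (lam*t) = 1 := by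
    rw [← Real.exp_add, ← Real.exp_add, ← Real.exp_zero]; congr 1; ring
  have key : B t * Real.exp (lam*t) =
      c'*K₁*w*(v*(u-1))/(a+lamhat) + c'*K₂*(u*v-1)/(a+lam) := by
    simp only [hBdef, hu, hv, hw]
    linear_combination (c'*K₁/(a+lamhat))*e1 - (c'*K₁/(a+lamhat))*e2 +
      (c'*K₂/(a+lam))*e3 - (c'*K₂/(a+lam))*e4
  have hEl : (0:ℝ) < Real.exp (lam*t) := Real.exp_pos _
  rw [Real.exp_neg, ← div_eq_mul_inv, le_div_iff₀ hEl, key]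
  have hA : 0 ≤ c'*K₁*w/(a+lamhat) := by positivity
  have hC : 0 ≤ c'*K₂/(a+lam) := by positivity
  have hK₃' : K₃ = c'*K₁*w/(a+lamhat) + c'*K₂/(a+lam) := by
    rw [hK₃def, hw]; ring
  have h1 : v*(u-1) ≤ β/K₃ := by
    have hvu : v*(u-1) ≤ 1*(u-1) := mul_le_mul_of_nonneg_right hv1 (by linarith)
    linarith
  have h2 : u*v-1 ≤ β/K₃ := by
    have hvu : u*v ≤ u*1 := mul_le_mul_of_nonneg_left hv1 (by linarith)
    linarith
  have hre : c'*K₁*w*(v*(u-1))/(a+lamhat) + c'*K₂*(u*v-1)/(a+lam) =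
      (c'*K₁*w/(a+lamhat))*(v*(u-1)) + (c'*K₂/(a+lam))*(u*v-1) := by ring
  rw [hre]
  calc (c'*K₁*w/(a+lamhat))*(v*(u-1)) + (c'*K₂/(a+lam))*(u*v-1) ≤
      (c'*K₁*w/(a+lamhat))*(β/K₃) + (c'*K₂/(a+lam))*(β/K₃) :=
        add_le_add (mul_le_mul_of_nonneg_left h1 hA) (mul_le_mul_of_nonneg_left h2 hC)
    _ = K₃ * (β/K₃) := by rw [hK₃']; ring
    _ = β := by field_simp
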